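/- (Lemma: expected work in the i-th iteration.) Let P ⊆ U be a finite set of n distinct points, let π : {1, …, n} → P be a uniformly random bijection, and for 0 ≤ j ≤ n set P_j = {π(1), …, π(j)}. Then for every 1 ≤ i ≤ n, the expected value of the sum, over all tiles f that belong to QT(P_i) but not to QT(P_{i−1}), of |P ∩ f| is at most 4n / i. -/

import Mathlib

/-- The unit square `U = [0,1) × [0,1)`. -/
def unitSq : Set (ℝ × ℝ) := Set.Ico (0 : ℝ) 1 ×ˢ Set.Ico (0 : ℝ) 1

/-- The square `[i/2^k, (i+1)/2^k) × [j/2^k, (j+1)/2^k)`. -/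
def canSq (k : ℕ) (i j : ℤ) : Set (ℝ × ℝ) :=
  Set.Ico ((i : ℝ) / 2 ^ k) (((i : ℝ) + 1) / 2 ^ k) ×ˢ
    Set.Ico ((j : ℝ) / 2 ^ k) (((j : ℝ) + 1) / 2 ^ k)

/-- `σ` is a canonical square of side length `2⁻ᵏ`: it has the form
`[i/2^k, (i+1)/2^k) × [j/2^k, (j+1)/2^k)` with `0 ≤ i, j < 2^k`
(so it is contained in the unit square). -/
def IsCanSqSide (k : ℕ) (σ : Set (ℝ × ℝ)) : Prop :=
  ∃ i j : ℤ, 0 ≤ i ∧ i < 2 ^ k ∧ 0 ≤ j ∧ j < 2 ^ k ∧ σ = canSq k i j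

/-- `σ` is a canonical square. -/
def IsCanSq (σ : Set (ℝ × ℝ)) : Prop := ∃ k : ℕ, IsCanSqSide k σ

/-- `q` is one of the four quadrants of the canonical square `σ`: if `σ` has side
length `2⁻ᵏ`, the quadrants are the canonical squares of side length `2⁻⁽ᵏ⁺¹⁾`
contained in `σ`. -/
def IsQuadrantOf (q σ : Set (ℝ × ℝ)) : Prop :=
  ∃ k : ℕ, IsCanSqSide k σ ∧ IsCanSqSide (k + 1) q ∧ q ⊆ σ

/-- `σ` is the smallest canonical square containing `S`: it is a canonical square,
it contains `S`, and it is contained in every canonical square containing `S`. -/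
def IsSmallestCanSq (S σ : Set (ℝ × ℝ)) : Prop :=
  IsCanSq σ ∧ S ⊆ σ ∧ ∀ τ : Set (ℝ × ℝ), IsCanSq τ → S ⊆ τ → σ ⊆ τ

open scoped Classical

/-- `smallestCanSq S`: the smallest canonical square containing `S` (junk value `∅` if none exists). -/
noncomputable def smallestCanSq (S : Set (ℝ × ℝ)) : Set (ℝ × ℝ) :=
  if h : ∃ σ : Set (ℝ × ℝ), IsSmallestCanSq S σ then h.choose else ∅

/-- A canonical square `σ` is critical for `P` if at least two of its four
quadrants contain a point of `P`. -/
def Critical (P σ : Set (ℝ × ℝ)) : Prop :=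
  IsCanSq σ ∧ ∃ q₁ q₂ : Set (ℝ × ℝ), IsQuadrantOf q₁ σ ∧ IsQuadrantOf q₂ σ ∧
    q₁ ≠ q₂ ∧ (P ∩ q₁).Nonempty ∧ (P ∩ q₂).Nonempty

/-- The tiles of the compressed quadtree map `QT(P)`: (i) `U` itself if `|P| ≤ 1`;
(ii) the annulus `U \ sq(P)` if `|P| ≥ 2` and `sq(P) ≠ U`; (iii) for every
canonical square `σ` critical for `P` and every quadrant `q` of `σ`: the square
`q` if `|P ∩ q| ≤ 1`, and the annulus `q \ sq(P ∩ q)` if `|P ∩ q| ≥ 2` and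
`sq(P ∩ q) ≠ q`. -/
noncomputable def QT (P : Set (ℝ × ℝ)) : Set (Set (ℝ × ℝ)) :=
  {f | (P.ncard ≤ 1 ∧ f = unitSq)
    ∨ (2 ≤ P.ncard ∧ smallestCanSq P ≠ unitSq ∧ f = unitSq \ smallestCanSq P)
    ∨ (∃ σ q : Set (ℝ × ℝ), Critical P σ ∧ IsQuadrantOf q σ ∧
        (((P ∩ q).ncard ≤ 1 ∧ f = q)
          ∨ (2 ≤ (P ∩ q).ncard ∧ smallestCanSq (P ∩ q) ≠ q ∧ f = q \ smallestCanSq (P ∩ q))))}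

/-- `P_j = {π(1), …, π(j)}`: the set of the first `j` points of `P` in the
random order `π : {1, …, n} → P` (modelled as `π : Fin n ≃ P`, with index
`t : Fin n` corresponding to position `t + 1`). -/
def prefixSet (n : ℕ) (P : Finset (ℝ × ℝ)) (π : Fin n ≃ {x // x ∈ P}) (j : ℕ) :
    Set (ℝ × ℝ) :=
  {x : ℝ × ℝ | ∃ t : Fin n, (t : ℕ) < j ∧ ((π t : {x // x ∈ P}) : ℝ × ℝ) = x}

-- ## basic dyadic geometry

lemma two_pow_pos' (k : ℕ) : (0:ℝ) < 2 ^ k := by positivity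

lemma mem_Ico_dyadic {x : ℝ} {k : ℕ} {i : ℤ} :
    x ∈ Set.Ico ((i:ℝ)/2^k) (((i:ℝ)+1)/2^k) ↔ ⌊x * 2^k⌋ = i := by
  have h2 : (0:ℝ) < 2 ^ k := two_pow_pos' k
  rw [Set.mem_Ico, Int.floor_eq_iff, div_le_iff₀ h2, lt_div_iff₀ h2]

lemma mem_canSq {p : ℝ × ℝ} {k : ℕ} {i j : ℤ} :
    p ∈ canSq k i j ↔ ⌊p.1 * 2 ^ k⌋ = i ∧ ⌊p.2 * 2 ^ k⌋ = j := by
  simp only [canSq, Set.mem_prod, mem_Ico_dyadic]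

lemma corner_mem_canSq (k : ℕ) (i j : ℤ) :
    ((i:ℝ)/2^k, (j:ℝ)/2^k) ∈ canSq k i j := by
  have h2 : (0:ℝ) < 2 ^ k := two_pow_pos' k
  rw [mem_canSq]
  constructor <;> · simp [div_mul_cancel₀, h2.ne']

lemma canSq_nonempty (k : ℕ) (i j : ℤ) : (canSq k i j).Nonempty :=
  ⟨_, corner_mem_canSq k i j⟩

lemma canSq_inj {k k' : ℕ} {i j i' j' : ℤ} (h : canSq k i j = canSq k' i' j') :
    k = k' ∧ i = i' ∧ j = j' := by
  have h2 : (0:ℝ) < 2 ^ k := two_pow_pos' k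
  have h2' : (0:ℝ) < 2 ^ k' := two_pow_pos' k'
  have hlt : ∀ (m : ℕ) (a : ℤ), ((a:ℝ))/2^m < ((a:ℝ)+1)/2^m := fun m a => by
    exact div_lt_div_of_pos_right (by linarith) (two_pow_pos' m)
  have hx := (Set.prod_eq_prod_iff_of_nonempty (by
    rw [show Set.Ico ((i : ℝ) / 2 ^ k) (((i : ℝ) + 1) / 2 ^ k) ×ˢ
      Set.Ico ((j : ℝ) / 2 ^ k) (((j : ℝ) + 1) / 2 ^ k) = canSq k i j from rfl]
    exact canSq_nonempty k i j)).mp h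
  obtain ⟨hx1, hx2⟩ := hx
  obtain ⟨e1, e2⟩ := (Set.Ico_eq_Ico_iff (Or.inl (hlt k i))).mp hx1
  obtain ⟨e3, e4⟩ := (Set.Ico_eq_Ico_iff (Or.inl (hlt k j))).mp hx2
  have hk : (2:ℝ) ^ k' = 2 ^ k := by
    field_simp at e1 e2; linarith
  have hkk : k' = k := Nat.pow_right_injective (by norm_num)
    (by exact_mod_cast hk : (2:ℕ)^k' = 2^k)
  subst hkk
  have hi : i = i' := by
    field_simp at e1; exact_mod_cast e1
  have hj : j = j' := by
    field_simp at e3; exact_mod_cast e3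
  exact ⟨rfl, hi, hj⟩

/-- The canonical square at level `k` containing `p`. -/
noncomputable def sqAt (k : ℕ) (p : ℝ × ℝ) : Set (ℝ × ℝ) :=
  canSq k ⌊p.1 * 2 ^ k⌋ ⌊p.2 * 2 ^ k⌋

lemma mem_sqAt_self (k : ℕ) (p : ℝ × ℝ) : p ∈ sqAt k p := by
  rw [sqAt, mem_canSq]; exact ⟨rfl, rfl⟩

lemma eq_sqAt_of_mem {p : ℝ × ℝ} {k : ℕ} {i j : ℤ} (h : p ∈ canSq k i j) :
    canSq k i j = sqAt k p := by
  rw [mem_canSq] at h; rw [sqAt, h.1, h.2]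

lemma floor_half (y : ℝ) : ⌊y / 2⌋ = ⌊y⌋ / 2 := by
  have h1 : (⌊y⌋ : ℝ) ≤ y := Int.floor_le y
  have h2 : y < ⌊y⌋ + 1 := Int.lt_floor_add_one y
  rw [Int.floor_eq_iff]
  constructor
  · push_cast
    have : (2:ℝ) * (⌊y⌋ / 2 : ℤ) ≤ ((⌊y⌋ : ℤ) : ℝ) := by
      exact_mod_cast (by omega : 2 * ((⌊y⌋ : ℤ) / 2) ≤ ⌊y⌋)
    linarith
  · push_cast
    have : ((⌊y⌋ : ℤ) : ℝ) ≤ 2 * (⌊y⌋ / 2 : ℤ) + 1 := by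
      exact_mod_cast (by omega : ⌊y⌋ ≤ 2 * ((⌊y⌋ : ℤ) / 2) + 1)
    linarith

lemma sqAt_succ_subset (k : ℕ) (p : ℝ × ℝ) : sqAt (k+1) p ⊆ sqAt k p := by
  intro q hq
  rw [sqAt, mem_canSq] at hq ⊢
  have key : ∀ x : ℝ, ⌊x * 2 ^ k⌋ = ⌊x * 2 ^ (k+1)⌋ / 2 := by
    intro x
    rw [← floor_half]
    congr 1; ring
  rw [key q.1, key q.2, key p.1, key p.2, hq.1, hq.2]
  exact ⟨rfl, rfl⟩

lemma sqAt_subset_sqAt {k k' : ℕ} (h : k ≤ k') (p : ℝ × ℝ) : sqAt k' p ⊆ sqAt k p := by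
  induction k' with
  | zero => simp_all
  | succ m ih =>
    rcases Nat.lt_or_ge k (m+1) with hk | hk
    · exact ((sqAt_succ_subset m p).trans (ih (by omega)))
    · have : k = m + 1 := by omega
      subst this; exact fun _ h => h

lemma unitSq_eq : unitSq = canSq 0 0 0 := by
  simp [unitSq, canSq]

lemma level_unique {k k' : ℕ} {σ : Set (ℝ × ℝ)} (h : IsCanSqSide k σ)
    (h' : IsCanSqSide k' σ) : k = k' := by
  obtain ⟨i, j, _, _, _, _, rfl⟩ := h
  obtain ⟨i', j', _, _, _, _, e⟩ := h'
  exact (canSq_inj e).1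

lemma canSqSide_subset_unitSq {k : ℕ} {σ : Set (ℝ × ℝ)} (h : IsCanSqSide k σ) :
    σ ⊆ unitSq := by
  obtain ⟨i, j, hi0, hi1, hj0, hj1, rfl⟩ := h
  intro p hp
  rw [mem_canSq] at hp
  have h2 : (0:ℝ) < 2 ^ k := two_pow_pos' k
  have hx1 : (0:ℝ) ≤ p.1 * 2^k := by
    have := hp.1 ▸ Int.floor_le (p.1 * 2^k)
    calc (0:ℝ) ≤ (i:ℝ) := by exact_mod_cast hi0
    _ ≤ _ := by rw [← hp.1]; exact Int.floor_le _
  have hx2 : p.1 * 2^k < 2^k := by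
    have := Int.lt_floor_add_one (p.1 * 2^k)
    have hi1' : (i:ℝ) + 1 ≤ 2^k := by exact_mod_cast hi1
    rw [hp.1] at this; linarith
  have hy1 : (0:ℝ) ≤ p.2 * 2^k := by
    calc (0:ℝ) ≤ (j:ℝ) := by exact_mod_cast hj0
    _ ≤ _ := by rw [← hp.2]; exact Int.floor_le _
  have hy2 : p.2 * 2^k < 2^k := by
    have := Int.lt_floor_add_one (p.2 * 2^k)
    have hj1' : (j:ℝ) + 1 ≤ 2^k := by exact_mod_cast hj1
    rw [hp.2] at this; linarith
  constructor
  · constructor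
    · nlinarith
    · nlinarith [mul_pos (mul_pos (sub_pos.mpr (show p.1 * 2^k < 2^k from hx2)) h2) h2]
  · constructor
    · nlinarith
    · nlinarith

lemma isCanSq_subset_unitSq {σ : Set (ℝ × ℝ)} (h : IsCanSq σ) : σ ⊆ unitSq := by
  obtain ⟨k, hk⟩ := h; exact canSqSide_subset_unitSq hk

lemma sqAt_side {k : ℕ} {p : ℝ × ℝ} (hp : p ∈ unitSq) : IsCanSqSide k (sqAt k p) := by
  obtain ⟨⟨hx0, hx1⟩, hy0, hy1⟩ := hp
  have h2 : (0:ℝ) < 2 ^ k := two_pow_pos' k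
  refine ⟨⌊p.1 * 2^k⌋, ⌊p.2 * 2^k⌋, ?_, ?_, ?_, ?_, rfl⟩
  · positivity
  · exact Int.floor_lt.mpr (by push_cast; nlinarith)
  · positivity
  · exact Int.floor_lt.mpr (by push_cast; nlinarith)

lemma side_eq_sqAt {k : ℕ} {σ : Set (ℝ × ℝ)} (h : IsCanSqSide k σ) {p : ℝ × ℝ}
    (hp : p ∈ σ) : σ = sqAt k p := by
  obtain ⟨i, j, _, _, _, _, rfl⟩ := h
  exact eq_sqAt_of_mem hp

/-- Nestedness: intersecting canonical squares are nested. -/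
lemma subset_of_inter {k k' : ℕ} {σ τ : Set (ℝ × ℝ)} (hσ : IsCanSqSide k σ)
    (hτ : IsCanSqSide k' τ) (hkk : k ≤ k') (hint : (σ ∩ τ).Nonempty) : τ ⊆ σ := by
  obtain ⟨p, hp1, hp2⟩ := hint
  rw [side_eq_sqAt hσ hp1, side_eq_sqAt hτ hp2]
  exact sqAt_subset_sqAt hkk p

/-- Two canonical squares of the same level are equal or disjoint. -/
lemma same_level_eq_or_disjoint {k : ℕ} {σ τ : Set (ℝ × ℝ)} (hσ : IsCanSqSide k σ)
    (hτ : IsCanSqSide k τ) : σ = τ ∨ Disjoint σ τ := by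
  rcases Set.eq_empty_or_nonempty (σ ∩ τ) with h | h
  · exact Or.inr (Set.disjoint_iff_inter_eq_empty.mpr h)
  · obtain ⟨p, hp1, hp2⟩ := h
    left; rw [side_eq_sqAt hσ hp1, side_eq_sqAt hτ hp2]

-- ## quadrants

lemma quadrant_side {q σ : Set (ℝ × ℝ)} {k : ℕ} (hq : IsQuadrantOf q σ)
    (hσ : IsCanSqSide k σ) : IsCanSqSide (k+1) q ∧ q ⊆ σ := by
  obtain ⟨k', h1, h2, h3⟩ := hq
  have : k' = k := level_unique h1 hσ
  subst this; exact ⟨h2, h3⟩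

/-- The quadrant of `σ` containing a given point. -/
lemma quadrant_eq_sqAt {q σ : Set (ℝ × ℝ)} {k : ℕ} (hq : IsQuadrantOf q σ)
    (hσ : IsCanSqSide k σ) {p : ℝ × ℝ} (hp : p ∈ q) : q = sqAt (k+1) p :=
  side_eq_sqAt (quadrant_side hq hσ).1 hp

lemma sqAt_isQuadrantOf {k : ℕ} {σ : Set (ℝ × ℝ)} (hσ : IsCanSqSide k σ)
    {p : ℝ × ℝ} (hp : p ∈ σ) : IsQuadrantOf (sqAt (k+1) p) σ := by
  have hpU : p ∈ unitSq := canSqSide_subset_unitSq hσ hp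
  refine ⟨k, hσ, sqAt_side hpU, ?_⟩
  rw [side_eq_sqAt hσ hp]
  exact sqAt_subset_sqAt (Nat.le_succ k) p

lemma canSq_ne_of_level_ne {k k' : ℕ} {σ τ : Set (ℝ × ℝ)} (hσ : IsCanSqSide k σ)
    (hτ : IsCanSqSide k' τ) (h : k ≠ k') : σ ≠ τ := by
  intro e; exact h (level_unique hσ (e ▸ hτ))

lemma quadrant_ne {q σ : Set (ℝ × ℝ)} (hq : IsQuadrantOf q σ) : q ≠ σ := by
  obtain ⟨k, h1, h2, _⟩ := hq
  exact canSq_ne_of_level_ne h2 h1 (by omega)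

-- ## smallest canonical squares

lemma isSmallest_unique {S σ τ : Set (ℝ × ℝ)} (h1 : IsSmallestCanSq S σ)
    (h2 : IsSmallestCanSq S τ) : σ = τ :=
  le_antisymm (h1.2.2 τ h2.1 h2.2.1) (h2.2.2 σ h1.1 h1.2.1)

lemma smallestCanSq_eq {S σ : Set (ℝ × ℝ)} (h : IsSmallestCanSq S σ) :
    smallestCanSq S = σ := by
  rw [smallestCanSq, dif_pos ⟨σ, h⟩]
  exact isSmallest_unique (Exists.choose_spec (⟨σ, h⟩ : ∃ τ, IsSmallestCanSq S τ)) h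

/-- Key: if `a, b ∈ T ⊆ σ` lie in different quadrants of `σ`, then `σ = sq(T)`. -/
lemma isSmallest_of_two_quadrants {T σ : Set (ℝ × ℝ)} {k : ℕ} (hσ : IsCanSqSide k σ)
    (hT : T ⊆ σ) {a b : ℝ × ℝ} (ha : a ∈ T) (hb : b ∈ T)
    (hab : sqAt (k+1) a ≠ sqAt (k+1) b) : IsSmallestCanSq T σ := by
  refine ⟨⟨k, hσ⟩, hT, ?_⟩
  rintro τ ⟨k', hτ⟩ hTτ
  rcases Nat.lt_or_ge k k' with hkk | hkk
  · -- τ would be inside a single quadrant: contradiction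
    exfalso
    have haτ : a ∈ τ := hTτ ha
    have hbτ : b ∈ τ := hTτ hb
    have h1 : τ = sqAt k' a := side_eq_sqAt hτ haτ
    have h2 : τ = sqAt k' b := side_eq_sqAt hτ hbτ
    have h3 : b ∈ sqAt (k+1) a := sqAt_subset_sqAt (by omega) a (h1 ▸ hbτ)
    exact hab (eq_sqAt_of_mem h3)
  · exact subset_of_inter hτ hσ hkk ⟨a, hTτ ha, hT ha⟩

lemma isSmallest_smallestCanSq {S : Set (ℝ × ℝ)} (h : ∃ σ, IsSmallestCanSq S σ) :
    IsSmallestCanSq S (smallestCanSq S) := by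
  rw [smallestCanSq, dif_pos h]; exact h.choose_spec

lemma abs_sub_lt_one_of_floor_eq {x y : ℝ} (h : ⌊x⌋ = ⌊y⌋) : |x - y| < 1 := by
  have h1 := Int.floor_le x
  have h2 := Int.lt_floor_add_one x
  have h3 := Int.floor_le y
  have h4 := Int.lt_floor_add_one y
  rw [h] at h1 h2
  rw [abs_sub_lt_iff]; constructor <;> linarith

/-- Existence of the smallest canonical square for a set with two distinct points. -/
lemma exists_isSmallestCanSq {S : Set (ℝ × ℝ)} (hSU : S ⊆ unitSq) {a b : ℝ × ℝ}
    (ha : a ∈ S) (hb : b ∈ S) (hab : a ≠ b) : ∃ σ, IsSmallestCanSq S σ := by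
  have haU : a ∈ unitSq := hSU ha
  set δ : ℝ := max |a.1 - b.1| |a.2 - b.2| with hδ
  have hδpos : 0 < δ := by
    have hor : a.1 ≠ b.1 ∨ a.2 ≠ b.2 := by
      by_contra h; push_neg at h; exact hab (Prod.ext h.1 h.2)
    rcases hor with h1 | h1
    · exact lt_max_of_lt_left (abs_pos.mpr (sub_ne_zero.mpr h1))
    · exact lt_max_of_lt_right (abs_pos.mpr (sub_ne_zero.mpr h1))
  obtain ⟨M, hM⟩ := pow_unbounded_of_one_lt (1/δ) (by norm_num : (1:ℝ) < 2)
  -- every valid level is < M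
  have hbound : ∀ k : ℕ, S ⊆ sqAt k a → k ≤ M := by
    intro k hk
    have hbk : b ∈ sqAt k a := hk hb
    rw [sqAt, mem_canSq] at hbk
    have e1 : |a.1 - b.1| * 2^k < 1 := by
      have := abs_sub_lt_one_of_floor_eq (hbk.1.symm ▸ rfl : ⌊b.1 * 2^k⌋ = ⌊a.1 * 2^k⌋)
      have h2 : (0:ℝ) < 2 ^ k := two_pow_pos' k
      calc |a.1 - b.1| * 2^k = |a.1 * 2^k - b.1 * 2^k| := by
            rw [← sub_mul, abs_mul, abs_of_pos h2]
      _ < 1 := by rw [abs_sub_comm]; exact this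
    have e2 : |a.2 - b.2| * 2^k < 1 := by
      have := abs_sub_lt_one_of_floor_eq (hbk.2.symm ▸ rfl : ⌊b.2 * 2^k⌋ = ⌊a.2 * 2^k⌋)
      have h2 : (0:ℝ) < 2 ^ k := two_pow_pos' k
      calc |a.2 - b.2| * 2^k = |a.2 * 2^k - b.2 * 2^k| := by
            rw [← sub_mul, abs_mul, abs_of_pos h2]
      _ < 1 := by rw [abs_sub_comm]; exact this
    have hδk : δ * 2^k < 1 := by
      rcases max_cases |a.1 - b.1| |a.2 - b.2| with ⟨h, _⟩ | ⟨h, _⟩ <;> rw [hδ, h]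
      · exact e1
      · exact e2
    by_contra hkM
    push_neg at hkM
    have h2 : (2:ℝ)^M ≤ 2^k := by
      apply pow_le_pow_right₀ (by norm_num) (by omega)
    have : 1/δ < 2^k := lt_of_lt_of_le hM h2
    rw [div_lt_iff₀ hδpos] at this
    nlinarith
  set km := Nat.findGreatest (fun k => S ⊆ sqAt k a) M with hkm
  have h0 : S ⊆ sqAt 0 a := by
    intro x hx
    rw [show sqAt 0 a = unitSq from ?_]
    · exact hSU hx
    · rw [side_eq_sqAt (⟨0, 0, by norm_num, by norm_num, by norm_num, by norm_num,
        unitSq_eq⟩ : IsCanSqSide 0 unitSq) haU]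
  have hspec : S ⊆ sqAt km a :=
    Nat.findGreatest_spec (P := fun k => S ⊆ sqAt k a) (Nat.zero_le M) h0
  refine ⟨sqAt km a, ⟨km, sqAt_side haU⟩, hspec, ?_⟩
  rintro τ ⟨k', hτ⟩ hSτ
  have : τ = sqAt k' a := side_eq_sqAt hτ (hSτ ha)
  subst this
  exact sqAt_subset_sqAt (Nat.le_findGreatest (hbound k' hSτ) hSτ) a

/-- From a smallest square, extract two points in different quadrants. -/
lemma exists_two_quadrants {T σ : Set (ℝ × ℝ)} {k : ℕ} (hσ : IsCanSqSide k σ)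
    (hs : IsSmallestCanSq T σ) (hne : T.Nonempty) :
    ∃ a ∈ T, ∃ b ∈ T, sqAt (k+1) a ≠ sqAt (k+1) b := by
  obtain ⟨a, ha⟩ := hne
  by_contra hc
  push_neg at hc
  have hTq : T ⊆ sqAt (k+1) a := by
    intro b hb
    have := (hc a ha b hb).symm
    exact this ▸ mem_sqAt_self (k+1) b
  have haU : a ∈ unitSq := canSqSide_subset_unitSq hσ (hs.2.1 ha)
  have h1 : σ ⊆ sqAt (k+1) a := hs.2.2 _ ⟨k+1, sqAt_side haU⟩ hTq
  have h2 : sqAt (k+1) a ⊆ σ := by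
    rw [side_eq_sqAt hσ (hs.2.1 ha)]
    exact sqAt_subset_sqAt (Nat.le_succ k) a
  have : σ = sqAt (k+1) a := le_antisymm h1 h2
  exact absurd (level_unique hσ (this ▸ sqAt_side haU (k := k+1))) (by omega)

-- ## critical squares

lemma critical_pair {S σ : Set (ℝ × ℝ)} {k : ℕ} (hc : Critical S σ)
    (hσ : IsCanSqSide k σ) :
    ∃ a ∈ S ∩ σ, ∃ b ∈ S ∩ σ, sqAt (k+1) a ≠ sqAt (k+1) b := by
  obtain ⟨_, q₁, q₂, hq₁, hq₂, hne, ⟨a, haS, haq⟩, ⟨b, hbS, hbq⟩⟩ := hc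
  refine ⟨a, ⟨haS, (quadrant_side hq₁ hσ).2 haq⟩, b, ⟨hbS, (quadrant_side hq₂ hσ).2 hbq⟩, ?_⟩
  rw [← quadrant_eq_sqAt hq₁ hσ haq, ← quadrant_eq_sqAt hq₂ hσ hbq]
  exact hne

lemma critical_isSmallest_pair {S σ : Set (ℝ × ℝ)} {k : ℕ} (hc : Critical S σ)
    (hσ : IsCanSqSide k σ) :
    ∃ a ∈ S ∩ σ, ∃ b ∈ S ∩ σ, a ≠ b ∧ IsSmallestCanSq {a, b} σ := by
  obtain ⟨a, ha, b, hb, hab⟩ := critical_pair hc hσ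
  have hne : a ≠ b := fun h => hab (h ▸ rfl)
  refine ⟨a, ha, b, hb, hne, ?_⟩
  exact isSmallest_of_two_quadrants hσ
    (by rintro x (rfl | rfl)
        · exact ha.2
        · exact hb.2)
    (Set.mem_insert a {b}) (Set.mem_insert_of_mem a rfl) hab

/-- A critical square is contained in every canonical square containing `S ∩ σ`. -/
lemma critical_subset {S σ τ : Set (ℝ × ℝ)} (hc : Critical S σ) (hτ : IsCanSq τ)
    (hsub : S ∩ σ ⊆ τ) : σ ⊆ τ := by
  obtain ⟨k, hσ⟩ := hc.1
  obtain ⟨a, ha, b, hb, hne, hsm⟩ := critical_isSmallest_pair hc hσ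
  exact hsm.2.2 τ hτ (by rintro x (rfl | rfl); exacts [hsub ha, hsub hb])

lemma critical_ncard {S σ : Set (ℝ × ℝ)} (hS : S.Finite) (hc : Critical S σ) :
    2 ≤ (S ∩ σ).ncard := by
  obtain ⟨k, hσ⟩ := hc.1
  obtain ⟨a, ha, b, hb, hne, _⟩ := critical_isSmallest_pair hc hσ
  exact Set.one_lt_ncard_iff (hS.inter_of_left σ) |>.mpr ⟨a, b, ha, hb, hne⟩

lemma critical_eq_smallestCanSq {S σ : Set (ℝ × ℝ)} (hc : Critical S σ) :
    ∃ a ∈ S, ∃ b ∈ S, σ = smallestCanSq {a, b} := by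
  obtain ⟨k, hσ⟩ := hc.1
  obtain ⟨a, ha, b, hb, hne, hsm⟩ := critical_isSmallest_pair hc hσ
  exact ⟨a, ha.1, b, hb.1, (smallestCanSq_eq hsm).symm⟩

-- ## quadrant enumeration and finiteness of QT

lemma quadrant_enum {q : Set (ℝ × ℝ)} {k : ℕ} {i j : ℤ}
    (hq : IsQuadrantOf q (canSq k i j)) (hside : IsCanSqSide k (canSq k i j)) :
    ∃ u v : ℤ, (u = 0 ∨ u = 1) ∧ (v = 0 ∨ v = 1) ∧ q = canSq (k+1) (2*i+u) (2*j+v) := by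
  obtain ⟨hq1, hq2⟩ := quadrant_side hq hside
  obtain ⟨i', j', _, _, _, _, rfl⟩ := hq1
  have hc := hq2 (corner_mem_canSq (k+1) i' j')
  rw [mem_canSq] at hc
  have e1 : (((i':ℝ))/2^(k+1)) * 2^k = (i':ℝ)/2 := by
    rw [pow_succ]; field_simp
  have e2 : (((j':ℝ))/2^(k+1)) * 2^k = (j':ℝ)/2 := by
    rw [pow_succ]; field_simp
  have f1 : i' / 2 = i := by
    have := hc.1; rw [e1, floor_half, Int.floor_intCast] at this; exact this
  have f2 : j' / 2 = j := by
    have := hc.2; rw [e2, floor_half, Int.floor_intCast] at this; exact this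
  refine ⟨i' - 2*i, j' - 2*j, by omega, by omega, by rw [show 2*i+(i'-2*i) = i' by ring,
    show 2*j+(j'-2*j) = j' by ring]⟩

lemma quadrants_finite (σ : Set (ℝ × ℝ)) : {q | IsQuadrantOf q σ}.Finite := by
  by_cases h : IsCanSq σ
  · obtain ⟨k, hside⟩ := h
    have hside' := hside
    obtain ⟨i, j, _, _, _, _, rfl⟩ := hside'
    apply Set.Finite.subset (s := {canSq (k+1) (2*i) (2*j), canSq (k+1) (2*i+1) (2*j),
      canSq (k+1) (2*i) (2*j+1), canSq (k+1) (2*i+1) (2*j+1)})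
      (Set.toFinite _)
    intro q hq
    obtain ⟨u, v, hu, hv, rfl⟩ := quadrant_enum hq hside
    rcases hu with rfl | rfl <;> rcases hv with rfl | rfl <;>
      simp only [Set.mem_insert_iff, Set.mem_singleton_iff, add_zero] <;> tauto
  · convert Set.finite_empty
    ext q; simp only [Set.mem_setOf_eq, Set.mem_empty_iff_false, iff_false]
    rintro ⟨k, hσ, _⟩; exact h ⟨k, hσ⟩

lemma critical_set_finite {S : Set (ℝ × ℝ)} (hS : S.Finite) :
    {σ | Critical S σ}.Finite := by
  apply Set.Finite.subset (((hS.prod hS).image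
    (fun ab : (ℝ×ℝ) × (ℝ×ℝ) => smallestCanSq {ab.1, ab.2})))
  intro σ hσ
  obtain ⟨a, ha, b, hb, he⟩ := critical_eq_smallestCanSq hσ
  exact ⟨(a, b), ⟨ha, hb⟩, he.symm⟩

lemma QT_finite {S : Set (ℝ × ℝ)} (hS : S.Finite) : (QT S).Finite := by
  have key : QT S ⊆ insert unitSq (insert (unitSq \ smallestCanSq S)
      (⋃ σ ∈ {σ | Critical S σ}, ⋃ q ∈ {q | IsQuadrantOf q σ},
        {q, q \ smallestCanSq (S ∩ q)})) := by
    rintro f (⟨_, rfl⟩ | ⟨_, _, rfl⟩ | ⟨σ, q, hc, hq, hf⟩)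
    · exact Set.mem_insert _ _
    · exact Set.mem_insert_of_mem _ (Set.mem_insert _ _)
    · refine Set.mem_insert_of_mem _ (Set.mem_insert_of_mem _ ?_)
      refine Set.mem_biUnion hc (Set.mem_biUnion hq ?_)
      rcases hf with ⟨_, rfl⟩ | ⟨_, _, rfl⟩
      · exact Set.mem_insert _ _
      · exact Set.mem_insert_of_mem _ rfl
  apply Set.Finite.subset _ key
  apply Set.Finite.insert
  apply Set.Finite.insert
  apply Set.Finite.biUnion (critical_set_finite hS)
  intro σ _
  exact Set.Finite.biUnion (quadrants_finite σ) (fun q _ => by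
    exact (Set.finite_singleton _).insert _)

-- ## disjointness of tiles

lemma side_nonempty {k : ℕ} {σ : Set (ℝ × ℝ)} (h : IsCanSqSide k σ) : σ.Nonempty := by
  obtain ⟨i, j, _, _, _, _, rfl⟩ := h; exact canSq_nonempty k i j

lemma not_critical_of_small {S σ : Set (ℝ × ℝ)} (hS : S.Finite) (h : S.ncard ≤ 1) :
    ¬ Critical S σ := fun hc =>
  absurd ((critical_ncard hS hc).trans (Set.ncard_le_ncard Set.inter_subset_left hS)) (by omega)

/-- The smallest canonical square of `S ∩ q` when it has two points. -/
lemma smallest_inter_spec {S q : Set (ℝ × ℝ)} {k : ℕ} (hq : IsCanSqSide k q)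
    (hS : S.Finite) (h2 : 2 ≤ (S ∩ q).ncard) :
    IsSmallestCanSq (S ∩ q) (smallestCanSq (S ∩ q)) := by
  obtain ⟨a, b, ha, hb, hab⟩ := (Set.one_lt_ncard_iff (hS.inter_of_left q)).mp (by omega)
  exact isSmallest_smallestCanSq (exists_isSmallestCanSq
    ((Set.inter_subset_right).trans (canSqSide_subset_unitSq hq)) ha hb hab)

/-- Core: two case-(iii) tiles at nested distinct quadrants are disjoint. -/
lemma tiles_disjoint_nested {S : Set (ℝ × ℝ)} (hS : S.Finite)
    {σ₁ σ₂ q₁ q₂ f g : Set (ℝ × ℝ)}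
    (hc₁ : Critical S σ₁) (hq₁ : IsQuadrantOf q₁ σ₁)
    (hc₂ : Critical S σ₂) (hq₂ : IsQuadrantOf q₂ σ₂)
    (hf : ((S ∩ q₁).ncard ≤ 1 ∧ f = q₁)
          ∨ (2 ≤ (S ∩ q₁).ncard ∧ smallestCanSq (S ∩ q₁) ≠ q₁ ∧ f = q₁ \ smallestCanSq (S ∩ q₁)))
    (hg : g ⊆ q₂) (hsub : q₂ ⊆ q₁) (hne : q₂ ≠ q₁) : Disjoint f g := by
  obtain ⟨k₁, hσ₁⟩ := hc₁.1
  obtain ⟨k₂, hσ₂⟩ := hc₂.1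
  have hq₁s : IsCanSqSide (k₁+1) q₁ := (quadrant_side hq₁ hσ₁).1
  have hq₂s : IsCanSqSide (k₂+1) q₂ := (quadrant_side hq₂ hσ₂).1
  have hq₂ne : q₂.Nonempty := side_nonempty hq₂s
  -- level comparison
  have hkk : k₁ + 1 < k₂ + 1 := by
    rcases Nat.lt_trichotomy (k₁+1) (k₂+1) with h | h | h
    · exact h
    · exfalso
      obtain ⟨p, hp⟩ := hq₂ne
      exact hne ((side_eq_sqAt hq₂s hp).trans (side_eq_sqAt (h ▸ hq₁s) (hsub hp)).symm)
    · exfalso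
      have : q₁ ⊆ q₂ := subset_of_inter hq₂s hq₁s (by omega)
        (hq₂ne.mono (Set.subset_inter (le_refl q₂) hsub))
      exact hne (le_antisymm hsub this)
  -- σ₂ ⊆ q₁
  have hσ₂q₁ : σ₂ ⊆ q₁ := by
    apply subset_of_inter hq₁s hσ₂ (by omega)
    exact hq₂ne.mono (Set.subset_inter hsub ((quadrant_side hq₂ hσ₂).2))
  -- two points of S in q₁
  obtain ⟨a, ha, b, hb, habq⟩ := critical_pair hc₂ hσ₂
  have hab : a ≠ b := fun h => habq (h ▸ rfl)
  have haq₁ : a ∈ S ∩ q₁ := ⟨ha.1, hσ₂q₁ ha.2⟩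
  have hbq₁ : b ∈ S ∩ q₁ := ⟨hb.1, hσ₂q₁ hb.2⟩
  have h2 : 2 ≤ (S ∩ q₁).ncard :=
    (Set.one_lt_ncard_iff (hS.inter_of_left q₁)).mpr ⟨a, b, haq₁, hbq₁, hab⟩
  rcases hf with ⟨h1, _⟩ | ⟨_, hneq, rfl⟩
  · omega
  · have hspec : IsSmallestCanSq (S ∩ q₁) (smallestCanSq (S ∩ q₁)) :=
      smallest_inter_spec hq₁s hS h2
    have hσ₂τ : σ₂ ⊆ smallestCanSq (S ∩ q₁) := by
      apply critical_subset hc₂ hspec.1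
      intro x hx
      exact hspec.2.1 ⟨hx.1, hσ₂q₁ hx.2⟩
    exact Set.disjoint_sdiff_left.mono_right (hg.trans
      (((quadrant_side hq₂ hσ₂).2).trans hσ₂τ))

/-- All pairs of distinct tiles of `QT S` are disjoint. -/
lemma QT_disjoint {S : Set (ℝ × ℝ)} (hS : S.Finite) (hSU : S ⊆ unitSq)
    {f g : Set (ℝ × ℝ)} (hf : f ∈ QT S) (hg : g ∈ QT S) (hfg : f ≠ g) :
    Disjoint f g := by
  have hUside : IsCanSqSide 0 unitSq :=
    ⟨0, 0, by norm_num, by norm_num, by norm_num, by norm_num, unitSq_eq⟩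
  -- smallest square of S exists when 2 ≤ ncard
  have hsqS : 2 ≤ S.ncard → IsSmallestCanSq S (smallestCanSq S) := by
    intro h2
    obtain ⟨a, b, ha, hb, hab⟩ := (Set.one_lt_ncard_iff hS).mp (by omega)
    exact isSmallest_smallestCanSq (exists_isSmallestCanSq hSU ha hb hab)
  -- case-(iii) tiles are inside smallestCanSq S
  have hiii : ∀ h : Set (ℝ × ℝ), (∃ σ q : Set (ℝ × ℝ), Critical S σ ∧ IsQuadrantOf q σ ∧
        (((S ∩ q).ncard ≤ 1 ∧ h = q)
          ∨ (2 ≤ (S ∩ q).ncard ∧ smallestCanSq (S ∩ q) ≠ q ∧ h = q \ smallestCanSq (S ∩ q)))) →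
      2 ≤ S.ncard ∧ h ⊆ smallestCanSq S := by
    rintro h ⟨σ, q, hc, hq, hh⟩
    have h2 : 2 ≤ S.ncard :=
      le_trans (critical_ncard hS hc) (Set.ncard_le_ncard Set.inter_subset_left hS)
    obtain ⟨k, hσ⟩ := hc.1
    have hσsub : σ ⊆ smallestCanSq S := critical_subset hc (hsqS h2).1
      (Set.inter_subset_left.trans (hsqS h2).2.1)
    have hhq : h ⊆ q := by
      rcases hh with ⟨_, rfl⟩ | ⟨_, _, rfl⟩
      · exact le_refl _
      · exact Set.diff_subset
    exact ⟨h2, hhq.trans (((quadrant_side hq hσ).2).trans hσsub)⟩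
  rcases hf with ⟨hf1, rfl⟩ | ⟨hf1, hf2, rfl⟩ | ⟨σ₁, q₁, hc₁, hq₁, hf3⟩
  · -- f = unitSq
    rcases hg with ⟨_, rfl⟩ | ⟨hg1, _, _⟩ | ⟨σ, q, hc, _, _⟩
    · exact absurd rfl hfg
    · omega
    · exact absurd hc (not_critical_of_small hS hf1)
  · -- f = unitSq \ smallestCanSq S
    rcases hg with ⟨hg1, rfl⟩ | ⟨_, _, rfl⟩ | hg3
    · omega
    · exact absurd rfl hfg
    · exact Set.disjoint_sdiff_left.mono_right (hiii g hg3).2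
  · -- f is a case-(iii) tile
    rcases hg with ⟨hg1, rfl⟩ | ⟨_, _, rfl⟩ | ⟨σ₂, q₂, hc₂, hq₂, hg3⟩
    · exact absurd hc₁ (not_critical_of_small hS hg1)
    · exact (Set.disjoint_sdiff_left.mono_right (hiii f ⟨σ₁, q₁, hc₁, hq₁, hf3⟩).2).symm
    · -- both case (iii)
      obtain ⟨k₁, hσ₁⟩ := hc₁.1
      obtain ⟨k₂, hσ₂⟩ := hc₂.1
      have hq₁s : IsCanSqSide (k₁+1) q₁ := (quadrant_side hq₁ hσ₁).1
      have hq₂s : IsCanSqSide (k₂+1) q₂ := (quadrant_side hq₂ hσ₂).1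
      have hfsub : f ⊆ q₁ := by
        rcases hf3 with ⟨_, rfl⟩ | ⟨_, _, rfl⟩
        · exact le_refl _
        · exact Set.diff_subset
      have hgsub : g ⊆ q₂ := by
        rcases hg3 with ⟨_, rfl⟩ | ⟨_, _, rfl⟩
        · exact le_refl _
        · exact Set.diff_subset
      by_cases hqq : q₁ = q₂
      · -- same quadrant: tiles coincide, contradiction
        exfalso
        subst hqq
        rcases hf3 with ⟨ha1, rfl⟩ | ⟨ha1, ha2, rfl⟩ <;>
          rcases hg3 with ⟨hb1, rfl⟩ | ⟨hb1, hb2, rfl⟩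
        · exact hfg rfl
        · omega
        · omega
        · exact hfg rfl
      · -- distinct quadrants: nested or disjoint
        rcases Set.eq_empty_or_nonempty (q₁ ∩ q₂) with hint | hint
        · exact Set.disjoint_of_subset hfsub hgsub
            (Set.disjoint_iff_inter_eq_empty.mpr hint)
        · rcases le_or_gt (k₁+1) (k₂+1) with hk | hk
          · have : q₂ ⊆ q₁ := subset_of_inter hq₁s hq₂s hk hint
            exact tiles_disjoint_nested hS hc₁ hq₁ hc₂ hq₂ hf3 hgsub this (fun h => hqq h.symm)
          · have : q₁ ⊆ q₂ := subset_of_inter hq₂s hq₁s (by omega)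
              (by rwa [Set.inter_comm] at hint)
            exact (tiles_disjoint_nested hS hc₂ hq₂ hc₁ hq₁ hg3 hfsub this hqq).symm

-- ## witness lemma: each tile survives deletion of all but ≤ 4 points

lemma card4 {α : Type*} [DecidableEq α] (a b c d : α) :
    ({a, b, c, d} : Finset α).card ≤ 4 := by
  apply le_trans (Finset.card_insert_le _ _)
  have h1 : ({b, c, d} : Finset α).card ≤ 3 := by
    apply le_trans (Finset.card_insert_le _ _)
    have h2 : ({c, d} : Finset α).card ≤ 2 := by
      apply le_trans (Finset.card_insert_le _ _)
      simp
    omega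
  omega

lemma QT_witness {S : Set (ℝ × ℝ)} (hS : S.Finite) (hSU : S ⊆ unitSq)
    {f : Set (ℝ × ℝ)} (hf : f ∈ QT S) :
    ∃ W : Finset (ℝ × ℝ), W.card ≤ 4 ∧ ∀ p : ℝ × ℝ, p ∉ W → f ∈ QT (S \ {p}) := by
  have hS' : ∀ p : ℝ × ℝ, (S \ {p}).Finite := fun p => hS.diff
  rcases hf with ⟨hf1, rfl⟩ | ⟨hf1, hf2, rfl⟩ | ⟨σ, q, hc, hq, hf3⟩
  · -- case (i)
    refine ⟨∅, by simp, fun p _ => Or.inl ⟨?_, rfl⟩⟩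
    exact le_trans (Set.ncard_le_ncard Set.diff_subset hS) hf1
  · -- case (ii)
    have hsm : IsSmallestCanSq S (smallestCanSq S) := by
      obtain ⟨a, b, ha, hb, hab⟩ := (Set.one_lt_ncard_iff hS).mp (by omega)
      exact isSmallest_smallestCanSq (exists_isSmallestCanSq hSU ha hb hab)
    obtain ⟨k, hσ⟩ := hsm.1
    obtain ⟨a, ha, b, hb, hab⟩ := exists_two_quadrants hσ hsm
      ((Set.nonempty_of_ncard_ne_zero (by omega)))
    have habne : a ≠ b := fun h => hab (h ▸ rfl)
    refine ⟨{a, b, a, a}, card4 a b a a, fun p hp => ?_⟩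
    simp only [Finset.mem_insert, Finset.mem_singleton, not_or] at hp
    have ha' : a ∈ S \ {p} := ⟨ha, fun h => hp.1 (by simpa using h.symm)⟩
    have hb' : b ∈ S \ {p} := ⟨hb, fun h => hp.2.1 (by simpa using h.symm)⟩
    have hsm' : IsSmallestCanSq (S \ {p}) (smallestCanSq S) :=
      isSmallest_of_two_quadrants hσ (Set.diff_subset.trans hsm.2.1) ha' hb' hab
    refine Or.inr (Or.inl ⟨?_, ?_, ?_⟩)
    · exact (Set.one_lt_ncard_iff (hS' p)).mpr ⟨a, b, ha', hb', habne⟩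
    · rw [smallestCanSq_eq hsm']; exact hf2
    · rw [smallestCanSq_eq hsm']
  · -- case (iii)
    obtain ⟨hcan, q₁, q₂, hq₁, hq₂, hqne, ⟨a, haS, haq⟩, ⟨b, hbS, hbq⟩⟩ := hc
    have hcrit' : ∀ p : ℝ × ℝ, a ≠ p → b ≠ p → Critical (S \ {p}) σ := by
      intro p hap hbp
      exact ⟨hcan, q₁, q₂, hq₁, hq₂, hqne, ⟨a, ⟨haS, by simpa using hap⟩, haq⟩,
        ⟨b, ⟨hbS, by simpa using hbp⟩, hbq⟩⟩
    obtain ⟨k, hσ⟩ := hcan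
    have hqs : IsCanSqSide (k+1) q := (quadrant_side hq hσ).1
    rcases hf3 with ⟨h1, rfl⟩ | ⟨h2, hneq, rfl⟩
    · -- subcase (a): f = q
      refine ⟨{a, b, a, a}, card4 a b a a, fun p hp => ?_⟩
      simp only [Finset.mem_insert, Finset.mem_singleton, not_or] at hp
      refine Or.inr (Or.inr ⟨σ, f, hcrit' p (fun h => hp.1 h.symm) (fun h => hp.2.1 h.symm), hq,
        Or.inl ⟨?_, rfl⟩⟩)
      exact le_trans (Set.ncard_le_ncard (Set.inter_subset_inter_left f Set.diff_subset)
        (hS.inter_of_left f)) h1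
    · -- subcase (b): f = q \ smallestCanSq (S ∩ q)
      have hspec : IsSmallestCanSq (S ∩ q) (smallestCanSq (S ∩ q)) :=
        smallest_inter_spec hqs hS h2
      obtain ⟨kτ, hτ⟩ := hspec.1
      obtain ⟨c, hcm, d, hdm, hcd⟩ := exists_two_quadrants hτ hspec
        (Set.nonempty_of_ncard_ne_zero (by omega))
      have hcdne : c ≠ d := fun h => hcd (h ▸ rfl)
      refine ⟨{a, b, c, d}, card4 a b c d, fun p hp => ?_⟩
      simp only [Finset.mem_insert, Finset.mem_singleton, not_or] at hp
      have hc' : c ∈ (S \ {p}) ∩ q := ⟨⟨hcm.1, by simpa using (fun h => hp.2.2.1 h.symm : c ≠ p)⟩, hcm.2⟩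
      have hd' : d ∈ (S \ {p}) ∩ q := ⟨⟨hdm.1, by simpa using (fun h => hp.2.2.2 h.symm : d ≠ p)⟩, hdm.2⟩
      have hsub' : (S \ {p}) ∩ q ⊆ smallestCanSq (S ∩ q) :=
        (Set.inter_subset_inter_left q Set.diff_subset).trans hspec.2.1
      have hsm' : IsSmallestCanSq ((S \ {p}) ∩ q) (smallestCanSq (S ∩ q)) :=
        isSmallest_of_two_quadrants hτ hsub' hc' hd' hcd
      refine Or.inr (Or.inr ⟨σ, q, hcrit' p (fun h => hp.1 h.symm) (fun h => hp.2.1 h.symm), hq,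
        Or.inr ⟨?_, ?_, ?_⟩⟩)
      · exact (Set.one_lt_ncard_iff ((hS' p).inter_of_left q)).mpr ⟨c, d, hc', hd', hcdne⟩
      · rw [smallestCanSq_eq hsm']; exact hneq
      · rw [smallestCanSq_eq hsm']

-- ## counting

lemma ncard_inter_eq_filter (P : Finset (ℝ × ℝ)) (f : Set (ℝ × ℝ)) :
    ((P : Set (ℝ × ℝ)) ∩ f).ncard = (P.filter (· ∈ f)).card := by
  rw [show (P : Set (ℝ × ℝ)) ∩ f = ↑(P.filter (· ∈ f)) by ext x; simp [and_comm]]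
  exact Set.ncard_coe_finset _

lemma sum_tiles_le (P : Finset (ℝ × ℝ)) {S : Set (ℝ × ℝ)} (hS : S.Finite)
    (hSU : S ⊆ unitSq) :
    ∑ f ∈ (QT_finite hS).toFinset, ((P : Set (ℝ × ℝ)) ∩ f).ncard ≤ P.card := by
  have hdisj : ∀ x ∈ (QT_finite hS).toFinset, ∀ y ∈ (QT_finite hS).toFinset, x ≠ y →
      Disjoint (P.filter (· ∈ x)) (P.filter (· ∈ y)) := by
    intro x hx y hy hxy
    rw [Set.Finite.mem_toFinset] at hx hy
    have := QT_disjoint hS hSU hx hy hxy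
    rw [Finset.disjoint_left]
    intro p hp1 hp2
    rw [Finset.mem_filter] at hp1 hp2
    exact Set.disjoint_left.mp this hp1.2 hp2.2
  calc ∑ f ∈ (QT_finite hS).toFinset, ((P : Set (ℝ × ℝ)) ∩ f).ncard
      = ∑ f ∈ (QT_finite hS).toFinset, (P.filter (· ∈ f)).card := by
        exact Finset.sum_congr rfl (fun f _ => ncard_inter_eq_filter P f)
    _ = ((QT_finite hS).toFinset.biUnion (fun f => P.filter (· ∈ f))).card :=
        (Finset.card_biUnion hdisj).symm
    _ ≤ P.card := Finset.card_le_card (Finset.biUnion_subset.mpr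
        (fun f _ => Finset.filter_subset _ _))

lemma key_count (P : Finset (ℝ × ℝ)) {S : Set (ℝ × ℝ)} (hS : S.Finite)
    (hSU : S ⊆ unitSq) {ι : Type*} (T : Finset ι) (e : ι → ℝ × ℝ)
    (hinj : Set.InjOn e T) :
    ∑ t ∈ T, (∑ᶠ f ∈ QT S \ QT (S \ {e t}), ((P : Set (ℝ × ℝ)) ∩ f).ncard)
      ≤ 4 * P.card := by
  classical
  set F := (QT_finite hS).toFinset with hF
  set w : Set (ℝ × ℝ) → ℕ := fun f => ((P : Set (ℝ × ℝ)) ∩ f).ncard with hw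
  have step1 : ∀ t ∈ T, (∑ᶠ f ∈ QT S \ QT (S \ {e t}), w f)
      = ∑ f ∈ F, if f ∉ QT (S \ {e t}) then w f else 0 := by
    intro t _
    have hfin : (QT S \ QT (S \ {e t})).Finite := (QT_finite hS).diff
    rw [finsum_mem_eq_finite_toFinset_sum _ hfin, ← Finset.sum_filter]
    apply Finset.sum_congr _ (fun _ _ => rfl)
    ext f
    simp only [Set.Finite.mem_toFinset, Set.mem_diff, Finset.mem_filter, hF,
      Set.Finite.mem_toFinset]
  rw [Finset.sum_congr rfl step1, Finset.sum_comm]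
  have step2 : ∀ f ∈ F, (∑ t ∈ T, if f ∉ QT (S \ {e t}) then w f else 0)
      ≤ 4 * w f := by
    intro f hfF
    have hfQT : f ∈ QT S := by rwa [hF, Set.Finite.mem_toFinset] at hfF
    obtain ⟨W, hW4, hWp⟩ := QT_witness hS hSU hfQT
    have hcard : (T.filter (fun t => f ∉ QT (S \ {e t}))).card ≤ 4 := by
      refine le_trans (Finset.card_le_card_of_injOn e ?_ ?_) hW4
      · intro t ht
        rw [Finset.mem_coe, Finset.mem_filter] at ht
        by_contra hnot
        exact ht.2 (hWp (e t) hnot)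
      · exact hinj.mono (fun t ht => Finset.mem_coe.mpr
          (Finset.mem_of_mem_filter t (by exact_mod_cast ht)))
    calc (∑ t ∈ T, if f ∉ QT (S \ {e t}) then w f else 0)
        = ∑ t ∈ T.filter (fun t => f ∉ QT (S \ {e t})), w f := by
          rw [Finset.sum_filter]
      _ = (T.filter (fun t => f ∉ QT (S \ {e t}))).card * w f := by
          rw [Finset.sum_const, smul_eq_mul]
      _ ≤ 4 * w f := Nat.mul_le_mul_right _ hcard
  calc ∑ f ∈ F, (∑ t ∈ T, if f ∉ QT (S \ {e t}) then w f else 0)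
      ≤ ∑ f ∈ F, 4 * w f := Finset.sum_le_sum step2
    _ = 4 * ∑ f ∈ F, w f := by rw [Finset.mul_sum]
    _ ≤ 4 * P.card := Nat.mul_le_mul_left _ (sum_tiles_le P hS hSU)


lemma prefixSet_subset (n : ℕ) (P : Finset (ℝ × ℝ)) (π : Fin n ≃ {x // x ∈ P}) (j : ℕ) :
    prefixSet n P π j ⊆ ↑P := by
  rintro x ⟨t, _, rfl⟩; exact (π t).2

lemma prefixSet_finite (n : ℕ) (P : Finset (ℝ × ℝ)) (π : Fin n ≃ {x // x ∈ P}) (j : ℕ) :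
    (prefixSet n P π j).Finite :=
  P.finite_toSet.subset (prefixSet_subset n P π j)

lemma coe_inj_P {P : Finset (ℝ × ℝ)} {a b : {x // x ∈ P}} (h : (a : ℝ × ℝ) = b) : a = b :=
  Subtype.ext h

lemma prefixSet_pred (n : ℕ) (P : Finset (ℝ × ℝ)) (π : Fin n ≃ {x // x ∈ P})
    {i : ℕ} (hi1 : 1 ≤ i) (hin : i ≤ n) :
    prefixSet n P π (i - 1)
      = prefixSet n P π i \ {((π ⟨i - 1, by omega⟩ : {x // x ∈ P}) : ℝ × ℝ)} := by
  ext x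
  constructor
  · rintro ⟨t, ht, rfl⟩
    refine ⟨⟨t, by omega, rfl⟩, ?_⟩
    intro h
    have : t = ⟨i - 1, by omega⟩ := π.injective (coe_inj_P (by simpa using h))
    rw [this] at ht; simp at ht
  · rintro ⟨⟨t, ht, rfl⟩, hne⟩
    refine ⟨t, ?_, rfl⟩
    have : t ≠ ⟨i - 1, by omega⟩ := fun h => hne (by rw [h]; rfl)
    have : (t : ℕ) ≠ i - 1 := fun h => this (Fin.ext h)
    omega

lemma prefixSet_swap (n : ℕ) (P : Finset (ℝ × ℝ)) (π : Fin n ≃ {x // x ∈ P})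
    {i : ℕ} {t₀ m : Fin n} (ht₀ : (t₀ : ℕ) < i) (hm : (m : ℕ) < i) :
    prefixSet n P ((Equiv.swap t₀ m).trans π) i = prefixSet n P π i := by
  ext x
  constructor
  · rintro ⟨t, ht, rfl⟩
    refine ⟨Equiv.swap t₀ m t, ?_, rfl⟩
    by_cases h1 : t = t₀
    · subst h1; rw [Equiv.swap_apply_left]; exact hm
    · by_cases h2 : t = m
      · subst h2; rw [Equiv.swap_apply_right]; exact ht₀
      · rw [Equiv.swap_apply_of_ne_of_ne h1 h2]; exact ht
  · rintro ⟨t, ht, rfl⟩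
    refine ⟨Equiv.swap t₀ m t, ?_, by simp⟩
    by_cases h1 : t = t₀
    · subst h1; rw [Equiv.swap_apply_left]; exact hm
    · by_cases h2 : t = m
      · subst h2; rw [Equiv.swap_apply_right]; exact ht₀
      · rw [Equiv.swap_apply_of_ne_of_ne h1 h2]; exact ht


/-- Expected work in the `i`-th iteration: for a uniformly random bijection
`π : {1, …, n} → P` and `P_j = {π(1), …, π(j)}`, the expected value of the sum,
over all tiles `f ∈ QT(P_i) \ QT(P_{i-1})`, of `|P ∩ f|`, is at most `4n / i`. -/
theorem expected_work_iteration (n : ℕ) (P : Finset (ℝ × ℝ)) (hcard : P.card = n)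
    (hPU : ∀ x ∈ P, x ∈ unitSq) (i : ℕ) (hi1 : 1 ≤ i) (hin : i ≤ n) :
    (∑ π : Fin n ≃ {x // x ∈ P},
        ((∑ᶠ f ∈ QT (prefixSet n P π i) \ QT (prefixSet n P π (i - 1)),
            ((P : Set (ℝ × ℝ)) ∩ f).ncard : ℕ) : ℝ))
        / ((Fintype.card (Fin n ≃ {x // x ∈ P})) : ℝ)
      ≤ 4 * (n : ℝ) / (i : ℝ) := by
  classical
  set m : Fin n := ⟨i - 1, by omega⟩ with hm
  have hmi : (m : ℕ) < i := by simp [hm]; omega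
  set T : Finset (Fin n) := Finset.univ.filter (fun t : Fin n => (t : ℕ) < i) with hT
  set G : (Fin n ≃ {x // x ∈ P}) → Fin n → ℕ := fun π t =>
    ∑ᶠ f ∈ QT (prefixSet n P π i) \ QT (prefixSet n P π i \ {((π t : {x // x ∈ P}) : ℝ × ℝ)}),
      ((P : Set (ℝ × ℝ)) ∩ f).ncard with hG
  -- each permutation's work equals G π m
  have hW : ∀ π : Fin n ≃ {x // x ∈ P},
      (∑ᶠ f ∈ QT (prefixSet n P π i) \ QT (prefixSet n P π (i - 1)),
        ((P : Set (ℝ × ℝ)) ∩ f).ncard) = G π m := by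
    intro π
    rw [hG]
    rw [prefixSet_pred n P π hi1 hin]
  -- swap invariance of the sums
  have hswap : ∀ t ∈ T, (∑ π : Fin n ≃ {x // x ∈ P}, G π t)
      = ∑ π : Fin n ≃ {x // x ∈ P}, G π m := by
    intro t ht
    rw [hT, Finset.mem_filter] at ht
    apply Fintype.sum_bijective (fun π : Fin n ≃ {x // x ∈ P} => (Equiv.swap t m).trans π)
    · constructor
      · intro π₁ π₂ h
        have : ∀ x, π₁ x = π₂ x := by
          intro x
          have := congrFun (congrArg (fun (e : Fin n ≃ {x // x ∈ P}) => e.toFun)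
            h) (Equiv.swap t m x)
          simpa using this
        exact Equiv.ext this
      · intro π
        exact ⟨(Equiv.swap t m).trans π, Equiv.ext (fun x => by simp)⟩
    · intro π
      have h1 : prefixSet n P ((Equiv.swap t m).trans π) i = prefixSet n P π i :=
        prefixSet_swap n P π ht.2 hmi
      have h2 : ((((Equiv.swap t m).trans π) m : {x // x ∈ P}) : ℝ × ℝ)
          = ((π t : {x // x ∈ P}) : ℝ × ℝ) := by
        simp [Equiv.swap_apply_right]
      simp only [hG]
      rw [h1, h2]
  -- per-permutation total bound
  have hper : ∀ π : Fin n ≃ {x // x ∈ P}, ∑ t ∈ T, G π t ≤ 4 * n := by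
    intro π
    have hSU : prefixSet n P π i ⊆ unitSq :=
      (prefixSet_subset n P π i).trans (fun x hx => hPU x hx)
    have := key_count P (prefixSet_finite n P π i) hSU T
      (fun t => ((π t : {x // x ∈ P}) : ℝ × ℝ))
      (fun a _ b _ h => π.injective (coe_inj_P h))
    rw [hcard] at this
    exact this
  have hTcard : T.card = i := by
    rw [hT]
    rw [show (Finset.univ.filter (fun t : Fin n => (t : ℕ) < i)) =
      Finset.map (Fin.castLEEmb hin) Finset.univ from ?_]
    · simp
    · ext t
      simp only [Finset.mem_filter, Finset.mem_univ, true_and, Finset.mem_map]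
      constructor
      · intro h
        exact ⟨⟨(t : ℕ), h⟩, by simp [Fin.castLEEmb, Fin.ext_iff]⟩
      · rintro ⟨s, _, rfl⟩
        simp [Fin.castLEEmb]
  -- main counting inequality in ℕ
  have hmain : i * (∑ π : Fin n ≃ {x // x ∈ P}, G π m)
      ≤ (Fintype.card (Fin n ≃ {x // x ∈ P})) * (4 * n) := by
    calc i * (∑ π : Fin n ≃ {x // x ∈ P}, G π m)
        = ∑ _t ∈ T, (∑ π : Fin n ≃ {x // x ∈ P}, G π m) := by
          rw [Finset.sum_const, hTcard, smul_eq_mul]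
      _ = ∑ t ∈ T, (∑ π : Fin n ≃ {x // x ∈ P}, G π t) := by
          exact (Finset.sum_congr rfl hswap).symm
      _ = ∑ π : Fin n ≃ {x // x ∈ P}, (∑ t ∈ T, G π t) := Finset.sum_comm
      _ ≤ ∑ _π : Fin n ≃ {x // x ∈ P}, 4 * n := Finset.sum_le_sum (fun π _ => hper π)
      _ = (Fintype.card (Fin n ≃ {x // x ∈ P})) * (4 * n) := by
          rw [Finset.sum_const, Finset.card_univ, smul_eq_mul]
  -- pass to reals
  have hNpos : 0 < Fintype.card (Fin n ≃ {x // x ∈ P}) := by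
    have : Nonempty (Fin n ≃ {x // x ∈ P}) := by
      refine ⟨(Fintype.equivFinOfCardEq ?_).symm⟩
      rw [Fintype.card_coe]; exact hcard
    exact Fintype.card_pos
  have hsum : (∑ π : Fin n ≃ {x // x ∈ P},
      ((∑ᶠ f ∈ QT (prefixSet n P π i) \ QT (prefixSet n P π (i - 1)),
          ((P : Set (ℝ × ℝ)) ∩ f).ncard : ℕ) : ℝ))
      = ((∑ π : Fin n ≃ {x // x ∈ P}, G π m : ℕ) : ℝ) := by
    rw [Nat.cast_sum]
    exact Finset.sum_congr rfl (fun π _ => by rw [hW π])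
  rw [hsum, div_le_div_iff₀ (by exact_mod_cast hNpos) (by exact_mod_cast hi1)]
  have := hmain
  have hcast : ((i : ℝ)) * ((∑ π : Fin n ≃ {x // x ∈ P}, G π m : ℕ) : ℝ)
      ≤ ((Fintype.card (Fin n ≃ {x // x ∈ P})) : ℝ) * (4 * n) := by
    exact_mod_cast hmain
  linarith
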